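/- For the Basis I chain complex (V₂, ∂₂) in the second Spin^c structure, the kernel of ∂₂ equals the image of ∂₂; that is, the homology of (V₂, ∂₂) is trivial. -/
import Mathlib


/-- The basis vectors `A, B, C₃, D₁₁, D₁₂, D₂₁, D₂₂, E₂₁, E₂₂, F₂, G₁₁, G₁₂, G₂₁, G₂₂,
G₃₁, G₃₂` (in this order) of the 16-dimensional vector space `V₂ = (Fin 16 → ZMod 2)`. -/
def e (i : Fin 16) : Fin 16 → ZMod 2 := Pi.single i 1

/-- A chain homotopy candidate: `h` sends `B ↦ A`, `C₃ ↦ F₂ + E₂₁`, `D₁₂ ↦ D₁₁ + A`,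
`D₂₂ ↦ D₂₁`, `E₂₂ ↦ E₂₁`, `G₁₂ ↦ G₁₁`, `G₂₂ ↦ G₂₁`, `G₃₂ ↦ G₃₁`, other basis vectors to 0. -/
noncomputable def hmap : (Fin 16 → ZMod 2) →ₗ[ZMod 2] (Fin 16 → ZMod 2) :=
  (LinearMap.proj 1).smulRight (e 0) + (LinearMap.proj 2).smulRight (e 9 + e 7)
  + (LinearMap.proj 4).smulRight (e 3 + e 0) + (LinearMap.proj 6).smulRight (e 5)
  + (LinearMap.proj 8).smulRight (e 7) + (LinearMap.proj 11).smulRight (e 10)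
  + (LinearMap.proj 13).smulRight (e 12) + (LinearMap.proj 15).smulRight (e 14)

lemma e_apply (i j : Fin 16) : e i j = if j = i then 1 else 0 := Pi.single_apply i 1 j

lemma hmap_e (i : Fin 16) : hmap (e i) =
    (e i 1) • e 0 + (e i 2) • (e 9 + e 7) + (e i 4) • (e 3 + e 0) + (e i 6) • e 5
    + (e i 8) • e 7 + (e i 11) • e 10 + (e i 13) • e 12 + (e i 15) • e 14 := by
  simp [hmap]

/-- For the Basis I chain complex `(V₂, ∂₂)` in the second `Spin^c` structure,
`ker ∂₂ = im ∂₂`, i.e. the homology of `(V₂, ∂₂)` is trivial. -/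
theorem stmt5 (D : (Fin 16 → ZMod 2) →ₗ[ZMod 2] (Fin 16 → ZMod 2))
    (hA : D (e 0) = e 1)
    (hB : D (e 1) = 0)
    (hC3 : D (e 2) = e 1)
    (hD11 : D (e 3) = e 1 + e 10 + e 4)
    (hD12 : D (e 4) = e 11)
    (hD21 : D (e 5) = e 6)
    (hD22 : D (e 6) = 0)
    (hE21 : D (e 7) = e 8)
    (hE22 : D (e 8) = 0)
    (hF2 : D (e 9) = e 8 + e 2 + e 0)
    (hG11 : D (e 10) = e 11)
    (hG12 : D (e 11) = 0)
    (hG21 : D (e 12) = e 7 + e 10 + e 13)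
    (hG22 : D (e 13) = e 8 + e 11)
    (hG31 : D (e 14) = e 5 + e 15)
    (hG32 : D (e 15) = e 6)
    :
    LinearMap.ker D = LinearMap.range D := by
  have hbasis : ∀ j : Fin 16, (Pi.basisFun (ZMod 2) (Fin 16)) j = e j := by
    intro j; ext k; simp [e, Pi.basisFun_apply, Pi.single]
  -- D ∘ D = 0
  have hDD : D ∘ₗ D = 0 := by
    apply Module.Basis.ext (Pi.basisFun (ZMod 2) (Fin 16))
    intro i
    rw [hbasis]
    fin_cases i <;>
      simp [hA, hB, hC3, hD11, hD12, hD21, hD22, hE21, hE22, hF2, hG11, hG12, hG21,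
        hG22, hG31, hG32, map_add] <;>
      decide
  -- chain homotopy identity
  have hkey : hmap ∘ₗ D + D ∘ₗ hmap = LinearMap.id := by
    apply Module.Basis.ext (Pi.basisFun (ZMod 2) (Fin 16))
    intro i
    rw [hbasis]
    fin_cases i <;>
      simp [hA, hB, hC3, hD11, hD12, hD21, hD22, hE21, hE22, hF2, hG11, hG12, hG21,
        hG22, hG31, hG32, hmap_e, e_apply, map_add] <;>
      decide
  apply le_antisymm
  · intro x hx
    have hx0 : D x = 0 := hx
    have := LinearMap.congr_fun hkey x
    simp only [LinearMap.add_apply, LinearMap.comp_apply, LinearMap.id_apply, hx0,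
      map_zero, zero_add] at this
    exact ⟨hmap x, this⟩
  · rintro x ⟨y, rfl⟩
    have := LinearMap.congr_fun hDD y
    simpa [LinearMap.mem_ker] using this
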